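/- For finite information structures u and v, player 1 weakly prefers u to v in every finite zero-sum game (i.e., val(u,g) ≥ val(v,g) for all payoff functions g bounded by 1) if and only if there exist garblings q₁, q₂ such that q₁.u = v.q₂. -/
import Mathlib


open scoped BigOperators

noncomputable section

/-- A probability distribution on a finite type, given as a nonnegative function summing to 1. -/
def IsDist {α : Type*} [Fintype α] (u : α → ℝ) : Prop :=
  (∀ a, 0 ≤ u a) ∧ ∑ a, u a = 1

/-- A garbling (stochastic map / behavioral strategy). -/
def IsKernel {α β : Type*} [Fintype β] (q : α → β → ℝ) : Prop :=
  ∀ a, IsDist (q a)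

/-- Expected payoff in the zero-sum Bayesian game `Γ(u,g)` when players use
behavioral strategies `σ` and `τ`. -/
def pay {K C D I J : Type*} [Fintype K] [Fintype C] [Fintype D] [Fintype I] [Fintype J]
    (u : K × C × D → ℝ) (g : K → I → J → ℝ) (σ : C → I → ℝ) (τ : D → J → ℝ) : ℝ :=
  ∑ k, ∑ c, ∑ d, ∑ i, ∑ j, u (k, c, d) * σ c i * τ d j * g k i j

/-- The value (maxmin) of the zero-sum Bayesian game `Γ(u,g)`, player 1 maximizing. -/
def gameVal {K C D I J : Type*} [Fintype K] [Fintype C] [Fintype D] [Fintype I] [Fintype J]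
    (u : K × C × D → ℝ) (g : K → I → J → ℝ) : ℝ :=
  sSup {x : ℝ | ∃ σ : C → I → ℝ, IsKernel σ ∧
    x = sInf {y : ℝ | ∃ τ : D → J → ℝ, IsKernel τ ∧ y = pay u g σ τ}}

/-- Garbling of player 1's signal: `(q.u)(k,c,d) = ∑ c', u(k,c',d) q(c|c')`. -/
def garbleL {K C C' D : Type*} [Fintype C] (q : C → C' → ℝ) (u : K × C × D → ℝ) :
    K × C' × D → ℝ :=
  fun x => ∑ c, u (x.1, c, x.2.2) * q c x.2.1

/-- Garbling of player 2's signal: `(u.q)(k,c,d) = ∑ d', u(k,c,d') q(d|d')`. -/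
def garbleR {K C D D' : Type*} [Fintype D] (q : D → D' → ℝ) (u : K × C × D → ℝ) :
    K × C × D' → ℝ :=
  fun x => ∑ d, u (x.1, x.2.1, d) * q d x.2.2

/-- ℓ¹ distance. -/
def l1 {α : Type*} [Fintype α] (u v : α → ℝ) : ℝ := ∑ a, |u a - v a|

/-- Payoff functions bounded by 1. -/
def Bounded1 {K I J : Type*} (g : K → I → J → ℝ) : Prop := ∀ k i j, |g k i j| ≤ 1

/-- The value-based distance: sup over all finite zero-sum games (with nonempty
finite action sets, payoffs bounded by 1) of the absolute difference of values. -/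
def valueDist {K C D C' D' : Type*} [Fintype K] [Fintype C] [Fintype D] [Fintype C'] [Fintype D']
    (u : K × C × D → ℝ) (v : K × C' × D' → ℝ) : ℝ :=
  sSup {x : ℝ | ∃ (m n : ℕ) (g : K → Fin (m + 1) → Fin (n + 1) → ℝ),
    Bounded1 g ∧ x = |gameVal u g - gameVal v g|}

/-- Value of a single-agent decision problem on a single-agent information structure. -/
def val1 {K C I : Type*} [Fintype K] [Fintype C] [Fintype I] [Nonempty I]
    (u : K × C → ℝ) (g : K → I → ℝ) : ℝ :=
  ∑ c, ⨆ i, ∑ k, u (k, c) * g k i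

/-- The single-agent value-based distance. -/
def valueDist1 {K C C' : Type*} [Fintype K] [Fintype C] [Fintype C']
    (u : K × C → ℝ) (v : K × C' → ℝ) : ℝ :=
  sSup {x : ℝ | ∃ (m : ℕ) (g : K → Fin (m + 1) → ℝ),
    (∀ k i, |g k i| ≤ 1) ∧ x = |val1 u g - val1 v g|}

/-- Garbling of the signal in a single-agent structure. -/
def garble1 {K C C' : Type*} [Fintype C] (q : C → C' → ℝ) (u : K × C → ℝ) : K × C' → ℝ :=
  fun x => ∑ c, u (x.1, c) * q c x.2

end

noncomputable section Aux
open Finset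

-- sum reordering helpers
lemma pull2 {α β : Type*} [Fintype α] [Fintype β] (F : α → β → ℝ) :
    ∑ a, ∑ b, F a b = ∑ b, ∑ a, F a b := Finset.sum_comm

lemma pull3 {α β γ : Type*} [Fintype α] [Fintype β] [Fintype γ] (F : α → β → γ → ℝ) :
    ∑ a, ∑ b, ∑ c, F a b c = ∑ c, ∑ a, ∑ b, F a b c := by
  calc ∑ a, ∑ b, ∑ c, F a b c = ∑ a, ∑ c, ∑ b, F a b c :=
        Finset.sum_congr rfl fun a _ => Finset.sum_comm
    _ = ∑ c, ∑ a, ∑ b, F a b c := Finset.sum_comm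

lemma pull4 {α β γ δ : Type*} [Fintype α] [Fintype β] [Fintype γ] [Fintype δ]
    (F : α → β → γ → δ → ℝ) :
    ∑ a, ∑ b, ∑ c, ∑ d, F a b c d = ∑ d, ∑ a, ∑ b, ∑ c, F a b c d := by
  calc ∑ a, ∑ b, ∑ c, ∑ d, F a b c d = ∑ a, ∑ d, ∑ b, ∑ c, F a b c d :=
        Finset.sum_congr rfl fun a _ => pull3 _
    _ = ∑ d, ∑ a, ∑ b, ∑ c, F a b c d := Finset.sum_comm

lemma pull5 {α β γ δ ε : Type*} [Fintype α] [Fintype β] [Fintype γ] [Fintype δ] [Fintype ε]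
    (F : α → β → γ → δ → ε → ℝ) :
    ∑ a, ∑ b, ∑ c, ∑ d, ∑ e, F a b c d e = ∑ e, ∑ a, ∑ b, ∑ c, ∑ d, F a b c d e := by
  calc ∑ a, ∑ b, ∑ c, ∑ d, ∑ e, F a b c d e = ∑ a, ∑ e, ∑ b, ∑ c, ∑ d, F a b c d e :=
        Finset.sum_congr rfl fun a _ => pull4 _
    _ = ∑ e, ∑ a, ∑ b, ∑ c, ∑ d, F a b c d e := Finset.sum_comm

lemma sum3_eq {K C D : Type*} [Fintype K] [Fintype C] [Fintype D] (u : K × C × D → ℝ) :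
    ∑ k, ∑ c, ∑ d, u (k, c, d) = ∑ a, u a := by
  rw [Fintype.sum_prod_type (f := u)]
  exact Finset.sum_congr rfl fun k _ => (Fintype.sum_prod_type (f := fun y : C × D => u (k, y))).symm

/-- composition of a garbling with a strategy -/
def compL {C C' I : Type*} [Fintype C'] (q : C → C' → ℝ) (σ : C' → I → ℝ) : C → I → ℝ :=
  fun c i => ∑ c', q c c' * σ c' i

lemma isKernel_compL {C C' I : Type*} [Fintype C'] [Fintype I] {q : C → C' → ℝ}
    {σ : C' → I → ℝ} (hq : IsKernel q) (hσ : IsKernel σ) : IsKernel (compL q σ) := by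
  intro c
  constructor
  · intro i
    exact Finset.sum_nonneg fun c' _ => mul_nonneg ((hq c).1 c') ((hσ c').1 i)
  · have h : ∑ i, compL q σ c i = ∑ c', q c c' * ∑ i, σ c' i := by
      simp only [compL]
      rw [Finset.sum_comm]
      exact Finset.sum_congr rfl fun c' _ => (Finset.mul_sum _ _ _).symm
    rw [h]
    simp only [fun c' => (hσ c').2, mul_one]
    exact (hq c).2

lemma isDist_garbleL {K C C' D : Type*} [Fintype K] [Fintype C] [Fintype C'] [Fintype D]
    {q : C → C' → ℝ} {u : K × C × D → ℝ} (hq : IsKernel q) (hu : IsDist u) :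
    IsDist (garbleL q u) := by
  constructor
  · intro a
    exact Finset.sum_nonneg fun c _ => mul_nonneg (hu.1 _) ((hq c).1 _)
  · calc ∑ a, garbleL q u a = ∑ k, ∑ c', ∑ d, garbleL q u (k, c', d) := (sum3_eq _).symm
      _ = ∑ k, ∑ c, ∑ d, u (k, c, d) := by
          refine Finset.sum_congr rfl fun k _ => ?_
          rw [show (∑ c', ∑ d, garbleL q u (k, c', d))
              = ∑ c', ∑ d, ∑ c, u (k, c, d) * q c c' from rfl]
          rw [pull3 (fun c' d c => u (k, c, d) * q c c')]
          refine Finset.sum_congr rfl fun c _ => ?_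
          rw [Finset.sum_comm]
          refine Finset.sum_congr rfl fun d _ => ?_
          rw [← Finset.mul_sum, (hq c).2, mul_one]
      _ = ∑ a, u a := sum3_eq u
      _ = 1 := hu.2

lemma isDist_garbleR {K C D D' : Type*} [Fintype K] [Fintype C] [Fintype D] [Fintype D']
    {q : D → D' → ℝ} {u : K × C × D → ℝ} (hq : IsKernel q) (hu : IsDist u) :
    IsDist (garbleR q u) := by
  constructor
  · intro a
    exact Finset.sum_nonneg fun d _ => mul_nonneg (hu.1 _) ((hq d).1 _)
  · calc ∑ a, garbleR q u a = ∑ k, ∑ c, ∑ d', garbleR q u (k, c, d') := (sum3_eq _).symm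
      _ = ∑ k, ∑ c, ∑ d, u (k, c, d) := by
          refine Finset.sum_congr rfl fun k _ => Finset.sum_congr rfl fun c _ => ?_
          rw [show (∑ d', garbleR q u (k, c, d')) = ∑ d', ∑ d, u (k, c, d) * q d d' from rfl]
          rw [Finset.sum_comm]
          refine Finset.sum_congr rfl fun d _ => ?_
          rw [← Finset.mul_sum, (hq d).2, mul_one]
      _ = ∑ a, u a := sum3_eq u
      _ = 1 := hu.2

lemma pay_compL {K C C' D I J : Type*} [Fintype K] [Fintype C] [Fintype C'] [Fintype D]
    [Fintype I] [Fintype J] (u : K × C × D → ℝ) (g : K → I → J → ℝ)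
    (q : C → C' → ℝ) (σ : C' → I → ℝ) (τ : D → J → ℝ) :
    pay u g (compL q σ) τ = pay (garbleL q u) g σ τ := by
  unfold pay compL garbleL
  simp only [Finset.sum_mul, Finset.mul_sum]
  refine Finset.sum_congr rfl fun k _ => ?_
  rw [pull5 (fun c d i j c' => u (k, c, d) * (q c c' * σ c' i) * τ d j * g k i j)]
  refine Finset.sum_congr rfl fun c' _ => ?_
  conv_rhs => rw [pull4 (fun d i j c => u (k, c, d) * q c c' * σ c' i * τ d j * g k i j)]
  refine Finset.sum_congr rfl fun c _ => Finset.sum_congr rfl fun d _ =>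
    Finset.sum_congr rfl fun i _ => Finset.sum_congr rfl fun j _ => by ring

lemma pay_garbleR {K C D D' I J : Type*} [Fintype K] [Fintype C] [Fintype D] [Fintype D']
    [Fintype I] [Fintype J] (v : K × C × D → ℝ) (g : K → I → J → ℝ)
    (q : D → D' → ℝ) (σ : C → I → ℝ) (τ : D' → J → ℝ) :
    pay (garbleR q v) g σ τ = pay v g σ (compL q τ) := by
  unfold pay compL garbleR
  simp only [Finset.sum_mul, Finset.mul_sum]
  refine Finset.sum_congr rfl fun k _ => Finset.sum_congr rfl fun c _ => ?_
  rw [pull4 (fun d i j d' => v (k, c, d') * q d' d * σ c i * τ d j * g k i j)]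
  refine Finset.sum_congr rfl fun d' _ => ?_
  conv_rhs => rw [pull3 (fun i j d => v (k, c, d') * σ c i * (q d' d * τ d j) * g k i j)]
  refine Finset.sum_congr rfl fun d _ => Finset.sum_congr rfl fun i _ =>
    Finset.sum_congr rfl fun j _ => by ring

lemma pay_abs_le {K C D I J : Type*} [Fintype K] [Fintype C] [Fintype D] [Fintype I] [Fintype J]
    {u : K × C × D → ℝ} {g : K → I → J → ℝ} {σ : C → I → ℝ} {τ : D → J → ℝ}
    (hu : IsDist u) (hg : Bounded1 g) (hσ : IsKernel σ) (hτ : IsKernel τ) :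
    |pay u g σ τ| ≤ 1 := by
  have hterm : ∀ (k : K) (c : C) (d : D) (i : I) (j : J),
      |u (k, c, d) * σ c i * τ d j * g k i j| ≤ u (k, c, d) * σ c i * τ d j := by
    intro k c d i j
    have hnn : 0 ≤ u (k, c, d) * σ c i * τ d j :=
      mul_nonneg (mul_nonneg (hu.1 _) ((hσ c).1 i)) ((hτ d).1 j)
    rw [abs_mul, abs_of_nonneg hnn]
    calc u (k, c, d) * σ c i * τ d j * |g k i j|
        ≤ u (k, c, d) * σ c i * τ d j * 1 := mul_le_mul_of_nonneg_left (hg k i j) hnn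
      _ = u (k, c, d) * σ c i * τ d j := mul_one _
  have h2 : |pay u g σ τ| ≤ ∑ k, ∑ c, ∑ d, ∑ i, ∑ j, u (k, c, d) * σ c i * τ d j := by
    unfold pay
    refine (Finset.abs_sum_le_sum_abs _ _).trans (Finset.sum_le_sum fun k _ => ?_)
    refine (Finset.abs_sum_le_sum_abs _ _).trans (Finset.sum_le_sum fun c _ => ?_)
    refine (Finset.abs_sum_le_sum_abs _ _).trans (Finset.sum_le_sum fun d _ => ?_)
    refine (Finset.abs_sum_le_sum_abs _ _).trans (Finset.sum_le_sum fun i _ => ?_)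
    refine (Finset.abs_sum_le_sum_abs _ _).trans (Finset.sum_le_sum fun j _ => ?_)
    exact hterm k c d i j
  have h3 : ∑ k, ∑ c, ∑ d, ∑ i, ∑ j, u (k, c, d) * σ c i * τ d j = 1 := by
    have hcd : ∀ (k : K) (c : C) (d : D), ∑ i, ∑ j, u (k, c, d) * σ c i * τ d j
        = u (k, c, d) := by
      intro k c d
      have : ∀ i : I, ∑ j, u (k, c, d) * σ c i * τ d j = u (k, c, d) * σ c i := by
        intro i
        rw [← Finset.mul_sum, (hτ d).2, mul_one]
      rw [Finset.sum_congr rfl fun i _ => this i, ← Finset.mul_sum, (hσ c).2, mul_one]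
    calc ∑ k, ∑ c, ∑ d, ∑ i, ∑ j, u (k, c, d) * σ c i * τ d j
        = ∑ k, ∑ c, ∑ d, u (k, c, d) := by
          exact Finset.sum_congr rfl fun k _ => Finset.sum_congr rfl fun c _ =>
            Finset.sum_congr rfl fun d _ => hcd k c d
      _ = ∑ a, u a := sum3_eq u
      _ = 1 := hu.2
  linarith [h2, h3]

/-- uniform kernel -/
def uK (α β : Type*) [Fintype β] : α → β → ℝ := fun _ _ => (Fintype.card β : ℝ)⁻¹

lemma isKernel_uK (α β : Type*) [Fintype β] [Nonempty β] : IsKernel (uK α β) := by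
  intro a
  constructor
  · intro b
    unfold uK
    positivity
  · unfold uK
    rw [Finset.sum_const, nsmul_eq_mul, Finset.card_univ, mul_inv_cancel₀]
    exact_mod_cast Fintype.card_ne_zero

def innerSet {K C D I J : Type*} [Fintype K] [Fintype C] [Fintype D] [Fintype I] [Fintype J]
    (u : K × C × D → ℝ) (g : K → I → J → ℝ) (σ : C → I → ℝ) : Set ℝ :=
  {y : ℝ | ∃ τ : D → J → ℝ, IsKernel τ ∧ y = pay u g σ τ}

def outerSet {K C D I J : Type*} [Fintype K] [Fintype C] [Fintype D] [Fintype I] [Fintype J]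
    (u : K × C × D → ℝ) (g : K → I → J → ℝ) : Set ℝ :=
  {x : ℝ | ∃ σ : C → I → ℝ, IsKernel σ ∧ x = sInf (innerSet u g σ)}

lemma gameVal_eq {K C D I J : Type*} [Fintype K] [Fintype C] [Fintype D] [Fintype I] [Fintype J]
    (u : K × C × D → ℝ) (g : K → I → J → ℝ) : gameVal u g = sSup (outerSet u g) := rfl

section Bounds
variable {K C D I J : Type*} [Fintype K] [Fintype C] [Fintype D] [Fintype I] [Fintype J]
  {u : K × C × D → ℝ} {g : K → I → J → ℝ} {σ : C → I → ℝ}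

lemma innerSet_nonempty [Nonempty J] : (innerSet u g σ).Nonempty :=
  ⟨pay u g σ (uK D J), uK D J, isKernel_uK D J, rfl⟩

lemma outerSet_nonempty [Nonempty I] : (outerSet u g).Nonempty :=
  ⟨sInf (innerSet u g (uK C I)), uK C I, isKernel_uK C I, rfl⟩

lemma bddBelow_innerSet (hu : IsDist u) (hg : Bounded1 g) (hσ : IsKernel σ) :
    BddBelow (innerSet u g σ) := by
  refine ⟨-1, fun y hy => ?_⟩
  obtain ⟨τ, hτ, rfl⟩ := hy
  have := pay_abs_le hu hg hσ hτ
  linarith [neg_abs_le (pay u g σ τ)]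

lemma sInf_innerSet_le_one [Nonempty J] (hu : IsDist u) (hg : Bounded1 g) (hσ : IsKernel σ) :
    sInf (innerSet u g σ) ≤ 1 := by
  refine csInf_le_of_le (bddBelow_innerSet hu hg hσ) (⟨uK D J, isKernel_uK D J, rfl⟩ :
    pay u g σ (uK D J) ∈ innerSet u g σ) ?_
  have := pay_abs_le hu hg hσ (isKernel_uK D J)
  linarith [le_abs_self (pay u g σ (uK D J))]

lemma bddAbove_outerSet [Nonempty J] (hu : IsDist u) (hg : Bounded1 g) :
    BddAbove (outerSet u g) := by
  refine ⟨1, fun x hx => ?_⟩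
  obtain ⟨σ', hσ', rfl⟩ := hx
  exact sInf_innerSet_le_one hu hg hσ'

end Bounds

section Compare
variable {K C D I J : Type*} [Fintype K] [Fintype C] [Fintype D] [Fintype I] [Fintype J]
  [Nonempty I] [Nonempty J]

lemma gameVal_garbleL_le {u : K × C × D → ℝ} {g : K → I → J → ℝ} {q : C → C → ℝ}
    (hu : IsDist u) (hg : Bounded1 g) (hq : IsKernel q) :
    gameVal (garbleL q u) g ≤ gameVal u g := by
  rw [gameVal_eq, gameVal_eq]
  refine csSup_le_csSup (bddAbove_outerSet hu hg) outerSet_nonempty ?_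
  rintro x ⟨σ, hσ, rfl⟩
  refine ⟨compL q σ, isKernel_compL hq hσ, ?_⟩
  congr 1
  ext y
  constructor
  · rintro ⟨τ, hτ, rfl⟩
    exact ⟨τ, hτ, (pay_compL u g q σ τ).symm⟩
  · rintro ⟨τ, hτ, rfl⟩
    exact ⟨τ, hτ, pay_compL u g q σ τ⟩

lemma gameVal_le_garbleR {v : K × C × D → ℝ} {g : K → I → J → ℝ} {q : D → D → ℝ}
    (hv : IsDist v) (hg : Bounded1 g) (hq : IsKernel q) :
    gameVal v g ≤ gameVal (garbleR q v) g := by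
  have hw : IsDist (garbleR q v) := isDist_garbleR hq hv
  rw [gameVal_eq, gameVal_eq]
  refine csSup_le outerSet_nonempty ?_
  rintro x ⟨σ, hσ, rfl⟩
  have hsub : innerSet (garbleR q v) g σ ⊆ innerSet v g σ := by
    rintro y ⟨τ, hτ, rfl⟩
    exact ⟨compL q τ, isKernel_compL hq hτ, pay_garbleR v g q σ τ⟩
  have h1 : sInf (innerSet v g σ) ≤ sInf (innerSet (garbleR q v) g σ) :=
    csInf_le_csInf (bddBelow_innerSet hv hg hσ) innerSet_nonempty hsub
  have h2 : sInf (innerSet (garbleR q v) g σ) ≤ sSup (outerSet (garbleR q v) g) :=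
    le_csSup (bddAbove_outerSet hw hg) ⟨σ, hσ, rfl⟩
  linarith

end Compare

def ip {α : Type*} [Fintype α] (u h : α → ℝ) : ℝ := ∑ a, u a * h a

lemma pay_mul {K C D I J : Type*} [Fintype K] [Fintype C] [Fintype D] [Fintype I] [Fintype J]
    (u : K × C × D → ℝ) (g : K → I → J → ℝ) (r : ℝ) (σ : C → I → ℝ) (τ : D → J → ℝ) :
    pay u (fun k i j => g k i j * r) σ τ = pay u g σ τ * r := by
  unfold pay
  simp only [Finset.sum_mul]
  exact Finset.sum_congr rfl fun k _ => Finset.sum_congr rfl fun c _ =>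
    Finset.sum_congr rfl fun d _ => Finset.sum_congr rfl fun i _ =>
    Finset.sum_congr rfl fun j _ => by ring

/-- "truthful reporting" strategy associated to an equivalence -/
def idS {C I : Type*} [DecidableEq I] (e : I ≃ C) : C → I → ℝ :=
  fun c i => if i = e.symm c then 1 else 0

lemma isKernel_idS {C I : Type*} [DecidableEq I] [Fintype I] (e : I ≃ C) :
    IsKernel (idS e) := by
  intro c
  constructor
  · intro i
    unfold idS
    split <;> norm_num
  · simp [idS]

/-- transport of a strategy to a kernel -/
def tkL {C I C' : Type*} (e : I ≃ C') (σ : C → I → ℝ) : C → C' → ℝ :=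
  fun c c' => σ c (e.symm c')

lemma isKernel_tkL {C I C' : Type*} [Fintype I] [Fintype C'] (e : I ≃ C') {σ : C → I → ℝ}
    (hσ : IsKernel σ) : IsKernel (tkL e σ) := by
  intro c
  constructor
  · intro c'
    exact (hσ c).1 _
  · show ∑ c', σ c (e.symm c') = 1
    rw [Equiv.sum_comp e.symm (σ c)]
    exact (hσ c).2

lemma pay_idS_right {K C D I J : Type*} [Fintype K] [Fintype C] [Fintype D] [Fintype I]
    [Fintype J] [DecidableEq J] (u : K × C × D → ℝ) (h : K × C × D → ℝ)
    (e : I ≃ C) (e' : J ≃ D) (σ : C → I → ℝ) :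
    pay u (fun k i j => h (k, e i, e' j)) σ (idS e') = ip (garbleL (tkL e σ) u) h := by
  have lhs : pay u (fun k i j => h (k, e i, e' j)) σ (idS e')
      = ∑ k, ∑ c, ∑ d, ∑ i, u (k, c, d) * σ c i * h (k, e i, d) := by
    unfold pay idS
    refine Finset.sum_congr rfl fun k _ => Finset.sum_congr rfl fun c _ =>
      Finset.sum_congr rfl fun d _ => Finset.sum_congr rfl fun i _ => ?_
    simp only [mul_ite, ite_mul, mul_one, one_mul, mul_zero, zero_mul,
      Finset.sum_ite_eq', Finset.mem_univ, if_true, Equiv.apply_symm_apply]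
  have rhs : ip (garbleL (tkL e σ) u) h
      = ∑ k, ∑ i, ∑ d, ∑ c, u (k, c, d) * σ c i * h (k, e i, d) := by
    unfold ip
    rw [← sum3_eq (fun a => garbleL (tkL e σ) u a * h a)]
    refine Finset.sum_congr rfl fun k _ => ?_
    rw [← Equiv.sum_comp e (fun c' => ∑ d, garbleL (tkL e σ) u (k, c', d) * h (k, c', d))]
    refine Finset.sum_congr rfl fun i _ => Finset.sum_congr rfl fun d _ => ?_
    show (∑ c, u (k, c, d) * σ c (e.symm (e i))) * h (k, e i, d) = _
    rw [Equiv.symm_apply_apply, Finset.sum_mul]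
  rw [lhs, rhs]
  refine Finset.sum_congr rfl fun k _ => ?_
  rw [pull3 (fun c d i => u (k, c, d) * σ c i * h (k, e i, d))]
  exact Finset.sum_congr rfl fun i _ => Finset.sum_comm

lemma pay_idS_left {K C D I J : Type*} [Fintype K] [Fintype C] [Fintype D] [Fintype I]
    [Fintype J] [DecidableEq I] (v : K × C × D → ℝ) (h : K × C × D → ℝ)
    (e : I ≃ C) (e' : J ≃ D) (τ : D → J → ℝ) :
    pay v (fun k i j => h (k, e i, e' j)) (idS e) τ = ip (garbleR (tkL e' τ) v) h := by
  have lhs : pay v (fun k i j => h (k, e i, e' j)) (idS e) τ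
      = ∑ k, ∑ c, ∑ d, ∑ j, v (k, c, d) * τ d j * h (k, c, e' j) := by
    unfold pay idS
    refine Finset.sum_congr rfl fun k _ => Finset.sum_congr rfl fun c _ =>
      Finset.sum_congr rfl fun d _ => ?_
    simp only [mul_ite, ite_mul, mul_one, one_mul, mul_zero, zero_mul,
      Finset.sum_ite_eq', Finset.mem_univ, if_true, Equiv.apply_symm_apply]
    rw [show (∑ i, ∑ j, if i = e.symm c then v (k, c, d) * τ d j * h (k, e i, e' j) else 0)
        = ∑ i, if i = e.symm c then ∑ j, v (k, c, d) * τ d j * h (k, e i, e' j) else 0 from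
        Finset.sum_congr rfl fun i _ => by split_ifs <;> simp,
      Finset.sum_ite_eq' Finset.univ (e.symm c)
        (fun i => ∑ j, v (k, c, d) * τ d j * h (k, e i, e' j))]
    simp [Equiv.apply_symm_apply]
  have rhs : ip (garbleR (tkL e' τ) v) h
      = ∑ k, ∑ c, ∑ j, ∑ d, v (k, c, d) * τ d j * h (k, c, e' j) := by
    unfold ip
    rw [← sum3_eq (fun a => garbleR (tkL e' τ) v a * h a)]
    refine Finset.sum_congr rfl fun k _ => Finset.sum_congr rfl fun c _ => ?_
    rw [← Equiv.sum_comp e' (fun d' => garbleR (tkL e' τ) v (k, c, d') * h (k, c, d'))]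
    refine Finset.sum_congr rfl fun j _ => ?_
    show (∑ d, v (k, c, d) * τ d (e'.symm (e' j))) * h (k, c, e' j) = _
    rw [Equiv.symm_apply_apply, Finset.sum_mul]
  rw [lhs, rhs]
  exact Finset.sum_congr rfl fun k _ => Finset.sum_congr rfl fun c _ => Finset.sum_comm

lemma isCompact_kernelSet {α β : Type*} [Fintype α] [Fintype β] :
    IsCompact {q : α → β → ℝ | IsKernel q} := by
  refine IsCompact.of_isClosed_subset
    (isCompact_univ_pi fun _ : α => isCompact_univ_pi fun _ : β =>
      isCompact_Icc (a := (0:ℝ)) (b := 1)) ?_ ?_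
  · have hset : {q : α → β → ℝ | IsKernel q}
        = (⋂ a, ⋂ b, {q : α → β → ℝ | 0 ≤ q a b}) ∩ ⋂ a, {q : α → β → ℝ | ∑ b, q a b = 1} := by
      ext q
      simp only [Set.mem_setOf_eq, Set.mem_inter_iff, Set.mem_iInter]
      constructor
      · intro hq; exact ⟨fun a b => (hq a).1 b, fun a => (hq a).2⟩
      · intro hq a; exact ⟨fun b => hq.1 a b, hq.2 a⟩
    rw [hset]
    refine IsClosed.inter (isClosed_iInter fun a => isClosed_iInter fun b => ?_)
      (isClosed_iInter fun a => ?_)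
    · exact isClosed_le continuous_const ((continuous_apply b).comp (continuous_apply a))
    · exact isClosed_eq
        (continuous_finset_sum _ fun b _ => (continuous_apply b).comp (continuous_apply a))
        continuous_const
  · intro q hq
    refine Set.mem_univ_pi.mpr fun a => Set.mem_univ_pi.mpr fun b => ⟨(hq a).1 b, ?_⟩
    calc q a b ≤ ∑ b', q a b' :=
          Finset.single_le_sum (fun b' _ => (hq a).1 b') (Finset.mem_univ b)
      _ = 1 := (hq a).2

lemma sepMain {K C D : Type*} [Fintype K] [Fintype C] [Fintype D]
    (u v : K × C × D → ℝ)
    (hng : ¬ ∃ (q₁ : C → C → ℝ) (q₂ : D → D → ℝ), IsKernel q₁ ∧ IsKernel q₂ ∧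
      garbleL q₁ u = garbleR q₂ v) :
    ∃ (h : K × C × D → ℝ) (ε : ℝ), 0 < ε ∧ ∀ (q₁ : C → C → ℝ) (q₂ : D → D → ℝ),
      IsKernel q₁ → IsKernel q₂ → ip (garbleL q₁ u) h + ε ≤ ip (garbleR q₂ v) h := by
  classical
  set S : Set ((K × C × D) → ℝ) :=
    {w | ∃ (q₁ : C → C → ℝ) (q₂ : D → D → ℝ), IsKernel q₁ ∧ IsKernel q₂ ∧
      w = garbleL q₁ u - garbleR q₂ v} with hS
  have hSimg : S = (fun p : (C → C → ℝ) × (D → D → ℝ) => garbleL p.1 u - garbleR p.2 v) ''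
      (({q | IsKernel q} : Set (C → C → ℝ)) ×ˢ ({q | IsKernel q} : Set (D → D → ℝ))) := by
    ext w
    constructor
    · rintro ⟨q₁, q₂, h₁, h₂, rfl⟩; exact ⟨(q₁, q₂), ⟨h₁, h₂⟩, rfl⟩
    · rintro ⟨⟨q₁, q₂⟩, ⟨h₁, h₂⟩, rfl⟩; exact ⟨q₁, q₂, h₁, h₂, rfl⟩
  have hcont : Continuous (fun p : (C → C → ℝ) × (D → D → ℝ) =>
      (garbleL p.1 u - garbleR p.2 v : (K × C × D) → ℝ)) := by
    refine continuous_pi fun x => ?_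
    simp only [Pi.sub_apply, garbleL, garbleR]
    refine Continuous.sub ?_ ?_
    · exact continuous_finset_sum _ fun c _ => continuous_const.mul
        ((continuous_apply x.2.1).comp ((continuous_apply c).comp continuous_fst))
    · exact continuous_finset_sum _ fun d _ => continuous_const.mul
        ((continuous_apply x.2.2).comp ((continuous_apply d).comp continuous_snd))
  have hScompact : IsCompact S := by
    rw [hSimg]
    exact (isCompact_kernelSet.prod isCompact_kernelSet).image hcont
  have hSclosed : IsClosed S := hScompact.isClosed
  have hSconv : Convex ℝ S := by
    rintro w ⟨q₁, q₂, h₁, h₂, rfl⟩ w' ⟨q₁', q₂', h₁', h₂', rfl⟩ a b ha hb hab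
    refine ⟨fun c c' => a * q₁ c c' + b * q₁' c c',
      fun d d' => a * q₂ d d' + b * q₂' d d', ?_, ?_, ?_⟩
    · intro c
      constructor
      · intro c'
        exact add_nonneg (mul_nonneg ha ((h₁ c).1 c')) (mul_nonneg hb ((h₁' c).1 c'))
      · rw [Finset.sum_add_distrib, ← Finset.mul_sum, ← Finset.mul_sum, (h₁ c).2, (h₁' c).2]
        simpa using hab
    · intro d
      constructor
      · intro d'
        exact add_nonneg (mul_nonneg ha ((h₂ d).1 d')) (mul_nonneg hb ((h₂' d).1 d'))
      · rw [Finset.sum_add_distrib, ← Finset.mul_sum, ← Finset.mul_sum, (h₂ d).2, (h₂' d).2]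
        simpa using hab
    · funext x
      simp only [Pi.add_apply, Pi.sub_apply, Pi.smul_apply, smul_eq_mul, garbleL, garbleR]
      rw [show ∀ (X Y X' Y' : ℝ), a * (X - Y) + b * (X' - Y')
          = (a * X + b * X') - (a * Y + b * Y') from fun _ _ _ _ => by ring]
      congr 1
      · rw [Finset.mul_sum, Finset.mul_sum, ← Finset.sum_add_distrib]
        exact Finset.sum_congr rfl fun c _ => by ring
      · rw [Finset.mul_sum, Finset.mul_sum, ← Finset.sum_add_distrib]
        exact Finset.sum_congr rfl fun d _ => by ring
  have h0 : (0 : (K × C × D) → ℝ) ∉ S := by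
    rintro ⟨q₁, q₂, h₁, h₂, h0'⟩
    exact hng ⟨q₁, q₂, h₁, h₂, sub_eq_zero.mp h0'.symm⟩
  obtain ⟨f, ub, hub0, hubS⟩ := geometric_hahn_banach_point_closed hSconv hSclosed h0
  rw [map_zero] at hub0
  set φ : K × C × D → ℝ := fun a => f (fun j => if a = j then 1 else 0) with hφ
  have hf : ∀ x : (K × C × D) → ℝ, f x = ∑ a, x a * φ a := by
    intro x
    conv_lhs => rw [pi_eq_sum_univ x]
    rw [map_sum]
    exact Finset.sum_congr rfl fun a _ => by rw [map_smul, smul_eq_mul]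
  refine ⟨fun a => -φ a, ub, hub0, ?_⟩
  intro q₁ q₂ hq₁ hq₂
  have hgt : ub < f (garbleL q₁ u - garbleR q₂ v) := hubS _ ⟨q₁, q₂, hq₁, hq₂, rfl⟩
  rw [hf] at hgt
  have e1 : ∑ a, (garbleL q₁ u - garbleR q₂ v) a * φ a
      = ∑ a, garbleL q₁ u a * φ a - ∑ a, garbleR q₂ v a * φ a := by
    rw [← Finset.sum_sub_distrib]
    exact Finset.sum_congr rfl fun a _ => by rw [Pi.sub_apply]; ring
  rw [e1] at hgt
  have e2 : ip (garbleL q₁ u) (fun a => -φ a) = -∑ a, garbleL q₁ u a * φ a := by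
    unfold ip
    rw [← Finset.sum_neg_distrib]
    exact Finset.sum_congr rfl fun a _ => by ring
  have e3 : ip (garbleR q₂ v) (fun a => -φ a) = -∑ a, garbleR q₂ v a * φ a := by
    unfold ip
    rw [← Finset.sum_neg_distrib]
    exact Finset.sum_congr rfl fun a _ => by ring
  rw [e2, e3]
  linarith

end Aux

theorem stmt2' {K C D : Type*} [Fintype K] [Fintype C] [Fintype D]
    (u v : K × C × D → ℝ) (hu : IsDist u) (hv : IsDist v) :
    (∀ (m n : ℕ) (g : K → Fin (m + 1) → Fin (n + 1) → ℝ), Bounded1 g →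
        gameVal v g ≤ gameVal u g) ↔
      ∃ (q₁ : C → C → ℝ) (q₂ : D → D → ℝ), IsKernel q₁ ∧ IsKernel q₂ ∧
        garbleL q₁ u = garbleR q₂ v := by
  classical
  have hKCD : Nonempty (K × C × D) := by
    by_contra hne
    rw [not_nonempty_iff] at hne
    have h1 := hu.2
    rw [Finset.univ_eq_empty, Finset.sum_empty] at h1
    exact one_ne_zero h1.symm
  obtain ⟨⟨k₀, c₀, d₀⟩⟩ := hKCD
  haveI : Nonempty C := ⟨c₀⟩
  haveI : Nonempty D := ⟨d₀⟩
  constructor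
  · intro hval
    by_contra hng
    obtain ⟨h, ε, hε, hsep⟩ := sepMain u v hng
    obtain ⟨m, hm⟩ : ∃ m, Fintype.card C = m + 1 :=
      ⟨Fintype.card C - 1, (Nat.succ_pred_eq_of_pos Fintype.card_pos).symm⟩
    obtain ⟨n, hn⟩ : ∃ n, Fintype.card D = n + 1 :=
      ⟨Fintype.card D - 1, (Nat.succ_pred_eq_of_pos Fintype.card_pos).symm⟩
    let e : Fin (m + 1) ≃ C := (Fintype.equivFinOfCardEq hm).symm
    let e' : Fin (n + 1) ≃ D := (Fintype.equivFinOfCardEq hn).symm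
    set M : ℝ := 1 + ∑ a, |h a| with hM
    have hM1 : (1 : ℝ) ≤ M := by
      have h1 : 0 ≤ ∑ a, |h a| := Finset.sum_nonneg fun a _ => abs_nonneg _
      linarith
    have hM0 : (0 : ℝ) < M := lt_of_lt_of_le one_pos hM1
    set g : K → Fin (m + 1) → Fin (n + 1) → ℝ :=
      fun k i j => h (k, e i, e' j) * M⁻¹ with hg
    have hB : Bounded1 g := by
      intro k i j
      show |h (k, e i, e' j) * M⁻¹| ≤ 1
      rw [abs_mul, abs_inv, abs_of_pos hM0]
      have h1 : |h (k, e i, e' j)| ≤ M := by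
        have h2 := Finset.single_le_sum (f := fun a : K × C × D => |h a|)
          (fun a _ => abs_nonneg _) (Finset.mem_univ (k, e i, e' j))
        linarith
      calc |h (k, e i, e' j)| * M⁻¹ ≤ M * M⁻¹ :=
            mul_le_mul_of_nonneg_right h1 (inv_nonneg.mpr hM0.le)
        _ = 1 := mul_inv_cancel₀ hM0.ne'
    have hVal := hval m n g hB
    have hKe : IsKernel (idS e) := isKernel_idS e
    have hKe' : IsKernel (idS e') := isKernel_idS e'
    have key : ∀ x ∈ outerSet u g, ∀ y ∈ innerSet v g (idS e), x + ε * M⁻¹ ≤ y := by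
      rintro x ⟨σ, hσ, rfl⟩ y ⟨τ, hτ, rfl⟩
      have hx : sInf (innerSet u g σ) ≤ pay u g σ (idS e') :=
        csInf_le (bddBelow_innerSet hu hB hσ) ⟨idS e', hKe', rfl⟩
      have hpx : pay u g σ (idS e') = ip (garbleL (tkL e σ) u) h * M⁻¹ := by
        rw [show g = fun k i j => (fun k i j => h (k, e i, e' j)) k i j * M⁻¹ from rfl,
          pay_mul u (fun k i j => h (k, e i, e' j)) M⁻¹ σ (idS e'), pay_idS_right]
      have hpy : pay v g (idS e) τ = ip (garbleR (tkL e' τ) v) h * M⁻¹ := by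
        rw [show g = fun k i j => (fun k i j => h (k, e i, e' j)) k i j * M⁻¹ from rfl,
          pay_mul v (fun k i j => h (k, e i, e' j)) M⁻¹ (idS e) τ, pay_idS_left]
      have hs := hsep (tkL e σ) (tkL e' τ) (isKernel_tkL e hσ) (isKernel_tkL e' hτ)
      have hmul : (ip (garbleL (tkL e σ) u) h + ε) * M⁻¹
          ≤ ip (garbleR (tkL e' τ) v) h * M⁻¹ :=
        mul_le_mul_of_nonneg_right hs (inv_nonneg.mpr hM0.le)
      rw [add_mul] at hmul
      rw [hpx] at hx
      rw [hpy]
      linarith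
    have hA : gameVal u g + ε * M⁻¹ ≤ sInf (innerSet v g (idS e)) := by
      rw [gameVal_eq]
      have h1 : ∀ x ∈ outerSet u g, x ≤ sInf (innerSet v g (idS e)) - ε * M⁻¹ := by
        intro x hx
        have h2 : x + ε * M⁻¹ ≤ sInf (innerSet v g (idS e)) :=
          le_csInf innerSet_nonempty fun y hy => key x hx y hy
        linarith
      have h3 := csSup_le outerSet_nonempty h1
      linarith
    have hBv : sInf (innerSet v g (idS e)) ≤ gameVal v g := by
      rw [gameVal_eq]
      exact le_csSup (bddAbove_outerSet hv hB) ⟨idS e, hKe, rfl⟩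
    have hpos : (0 : ℝ) < ε * M⁻¹ := mul_pos hε (inv_pos.mpr hM0)
    linarith
  · rintro ⟨q₁, q₂, hq₁, hq₂, hEq⟩
    intro m n g hg
    calc gameVal v g ≤ gameVal (garbleR q₂ v) g := gameVal_le_garbleR hv hg hq₂
      _ = gameVal (garbleL q₁ u) g := by rw [hEq]
      _ ≤ gameVal u g := gameVal_garbleL_le hu hg hq₁


theorem stmt2 {K C D : Type*} [Fintype K] [Fintype C] [Fintype D]
    (u v : K × C × D → ℝ) (hu : IsDist u) (hv : IsDist v) :
    (∀ (m n : ℕ) (g : K → Fin (m + 1) → Fin (n + 1) → ℝ), Bounded1 g →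
        gameVal v g ≤ gameVal u g) ↔
      ∃ (q₁ : C → C → ℝ) (q₂ : D → D → ℝ), IsKernel q₁ ∧ IsKernel q₂ ∧
        garbleL q₁ u = garbleR q₂ v :=
  stmt2' u v hu hv
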